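/- Jensen-type squared-telescoping bound: for f : ℤ → ℝ, nonnegative weights π̂_j summing to 1 over j ∈ {-N,...,N}, and i ∈ {-N,...,N}: (f_i - ∑_{j=-N}^N f_j π̂_j)² ≤ ∑_{k=-N}^{i-1} (∑_{j=-N}^{k} π̂_j (i-j)) (f_{k+1} - f_k)² + ∑_{k=i+1}^{N} (∑_{j=k}^{N} π̂_j (j-i)) (f_{k-1} - f_k)². -/

import Mathlib

open Finset

lemma int_sum_Icc_succ_top {a b : ℤ} (hab : a ≤ b + 1) (f : ℤ → ℝ) :
    ∑ k ∈ Finset.Icc a (b+1), f k = (∑ k ∈ Finset.Icc a b, f k) + f (b+1) := by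
  have h1 : Finset.Icc a (b+1) = insert (b+1) (Finset.Icc a b) := by
    ext x; simp [Finset.mem_Icc]; omega
  rw [h1, Finset.sum_insert (by simp [Finset.mem_Icc])]
  ring

lemma tel1 (f : ℤ → ℝ) (a : ℤ) : ∀ b, a ≤ b →
    ∑ k ∈ Finset.Icc a (b-1), (f (k+1) - f k) = f b - f a := by
  intro b
  refine Int.le_induction (motive := fun b _ => ∑ k ∈ Finset.Icc a (b-1), (f (k+1) - f k) = f b - f a) ?_ ?_ b
  · simp
  · intro n hn ih
    rw [show n + 1 - 1 = (n - 1) + 1 by ring,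
      int_sum_Icc_succ_top (by omega), ih, show n - 1 + 1 = n by ring]
    ring

lemma tel2 (f : ℤ → ℝ) (a : ℤ) : ∀ b, a ≤ b →
    ∑ k ∈ Finset.Icc (a+1) b, (f (k-1) - f k) = f a - f b := by
  intro b
  refine Int.le_induction (motive := fun b _ => ∑ k ∈ Finset.Icc (a+1) b, (f (k-1) - f k) = f a - f b) ?_ ?_ b
  · simp
  · intro n hn ih
    rw [int_sum_Icc_succ_top (by omega), ih, show n + 1 - 1 = n by ring]
    ring

lemma csL (f : ℤ → ℝ) {j i : ℤ} (h : j ≤ i) :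
    (f i - f j)^2 ≤ ((i:ℝ) - j) * ∑ k ∈ Finset.Icc j (i-1), (f (k+1) - f k)^2 := by
  rw [← tel1 f j i h]
  have hcard : ((Finset.Icc j (i-1)).card : ℝ) = (i:ℝ) - j := by
    rw [Int.card_Icc]
    have : (i - 1 + 1 - j).toNat = (i - j).toNat := by omega
    rw [this]
    have h0 : (((i - j).toNat : ℤ)) = i - j := by omega
    exact_mod_cast h0
  calc (∑ k ∈ Finset.Icc j (i-1), (f (k+1) - f k))^2
      ≤ ((Finset.Icc j (i-1)).card : ℝ) * ∑ k ∈ Finset.Icc j (i-1), (f (k+1) - f k)^2 :=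
        sq_sum_le_card_mul_sum_sq
    _ = ((i:ℝ) - j) * _ := by rw [hcard]

lemma csR (f : ℤ → ℝ) {j i : ℤ} (h : i ≤ j) :
    (f i - f j)^2 ≤ ((j:ℝ) - i) * ∑ k ∈ Finset.Icc (i+1) j, (f (k-1) - f k)^2 := by
  rw [← tel2 f i j h]
  have hcard : ((Finset.Icc (i+1) j).card : ℝ) = (j:ℝ) - i := by
    rw [Int.card_Icc]
    have : (j + 1 - (i+1)).toNat = (j - i).toNat := by omega
    rw [this]
    have h0 : (((j - i).toNat : ℤ)) = j - i := by omega
    exact_mod_cast h0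
  calc (∑ k ∈ Finset.Icc (i+1) j, (f (k-1) - f k))^2
      ≤ ((Finset.Icc (i+1) j).card : ℝ) * ∑ k ∈ Finset.Icc (i+1) j, (f (k-1) - f k)^2 :=
        sq_sum_le_card_mul_sum_sq
    _ = ((j:ℝ) - i) * _ := by rw [hcard]

/-- Jensen-type squared-telescoping bound. -/
theorem jensen_telescoping_bound (N : ℕ) (f piH : ℤ → ℝ)
    (hpi : ∀ j ∈ Finset.Icc (-(N:ℤ)) N, 0 ≤ piH j)
    (hsum : ∑ j ∈ Finset.Icc (-(N:ℤ)) N, piH j = 1)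
    (i : ℤ) (hi : i ∈ Finset.Icc (-(N:ℤ)) N) :
    (f i - ∑ j ∈ Finset.Icc (-(N:ℤ)) N, f j * piH j)^2
      ≤ (∑ k ∈ Finset.Icc (-(N:ℤ)) (i-1),
            (∑ j ∈ Finset.Icc (-(N:ℤ)) k, piH j * ((i : ℝ) - j)) * (f (k+1) - f k)^2)
        + ∑ k ∈ Finset.Icc (i+1) (N:ℤ),
            (∑ j ∈ Finset.Icc k (N:ℤ), piH j * ((j : ℝ) - i)) * (f (k-1) - f k)^2 := by
  simp only [Finset.mem_Icc] at hi
  set S := Finset.Icc (-(N:ℤ)) (N:ℤ) with hS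
  -- Step 1: rewrite LHS
  have h1 : f i - ∑ j ∈ S, f j * piH j = ∑ j ∈ S, piH j * (f i - f j) := by
    have : ∑ j ∈ S, piH j * (f i - f j)
        = (∑ j ∈ S, piH j) * f i - ∑ j ∈ S, f j * piH j := by
      rw [Finset.sum_mul, ← Finset.sum_sub_distrib]
      exact Finset.sum_congr rfl (fun j _ => by ring)
    rw [this, hsum, one_mul]
  -- Step 2: Jensen (Cauchy–Schwarz)
  have h2 : (∑ j ∈ S, piH j * (f i - f j))^2 ≤ ∑ j ∈ S, piH j * (f i - f j)^2 := by
    have key := Finset.sum_mul_sq_le_sq_mul_sq S (fun j => Real.sqrt (piH j))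
      (fun j => Real.sqrt (piH j) * (f i - f j))
    have e1 : ∀ j ∈ S, Real.sqrt (piH j) * (Real.sqrt (piH j) * (f i - f j))
        = piH j * (f i - f j) := by
      intro j hj
      rw [← mul_assoc, Real.mul_self_sqrt (hpi j hj)]
    have e2 : ∀ j ∈ S, Real.sqrt (piH j) ^ 2 = piH j := fun j hj =>
      Real.sq_sqrt (hpi j hj)
    have e3 : ∀ j ∈ S, (Real.sqrt (piH j) * (f i - f j))^2 = piH j * (f i - f j)^2 := by
      intro j hj
      rw [mul_pow, Real.sq_sqrt (hpi j hj)]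
    rw [Finset.sum_congr rfl e1, Finset.sum_congr rfl e2, Finset.sum_congr rfl e3, hsum,
      one_mul] at key
    exact key
  rw [h1]
  refine h2.trans ?_
  -- Step 3: split the sum
  have hsplit : S = Finset.Icc (-(N:ℤ)) (i-1) ∪ Finset.Icc i (N:ℤ) := by
    ext x; simp only [hS, Finset.mem_Icc, Finset.mem_union]; omega
  have hdisj : Disjoint (Finset.Icc (-(N:ℤ)) (i-1)) (Finset.Icc i (N:ℤ)) := by
    simp only [Finset.disjoint_left, Finset.mem_Icc]; omega
  have hins : Finset.Icc i (N:ℤ) = insert i (Finset.Icc (i+1) (N:ℤ)) := by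
    ext x; simp only [Finset.mem_Icc, Finset.mem_insert]; omega
  rw [hsplit, Finset.sum_union hdisj, hins,
    Finset.sum_insert (by simp [Finset.mem_Icc])]
  have hzero : piH i * (f i - f i)^2 = 0 := by ring
  rw [hzero, zero_add]
  -- Step 4: bound each half
  have hL : ∑ j ∈ Finset.Icc (-(N:ℤ)) (i-1), piH j * (f i - f j)^2
      ≤ ∑ k ∈ Finset.Icc (-(N:ℤ)) (i-1),
          (∑ j ∈ Finset.Icc (-(N:ℤ)) k, piH j * ((i : ℝ) - j)) * (f (k+1) - f k)^2 := by
    have step : ∑ j ∈ Finset.Icc (-(N:ℤ)) (i-1), piH j * (f i - f j)^2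
        ≤ ∑ j ∈ Finset.Icc (-(N:ℤ)) (i-1),
            ∑ k ∈ Finset.Icc j (i-1), piH j * ((i:ℝ) - j) * (f (k+1) - f k)^2 := by
      refine Finset.sum_le_sum (fun j hj => ?_)
      simp only [Finset.mem_Icc] at hj
      have hpij : 0 ≤ piH j := hpi j (by simp [hS, Finset.mem_Icc]; omega)
      have := csL f (show j ≤ i by omega)
      calc piH j * (f i - f j)^2
          ≤ piH j * (((i:ℝ) - j) * ∑ k ∈ Finset.Icc j (i-1), (f (k+1) - f k)^2) :=
            mul_le_mul_of_nonneg_left this hpij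
        _ = ∑ k ∈ Finset.Icc j (i-1), piH j * ((i:ℝ) - j) * (f (k+1) - f k)^2 := by
            simp only [Finset.mul_sum]; refine Finset.sum_congr rfl fun k _ => by ring
    refine step.trans_eq ?_
    rw [Finset.sum_comm' (s' := fun k => Finset.Icc (-(N:ℤ)) k)
      (t' := Finset.Icc (-(N:ℤ)) (i-1))
      (fun x y => by simp only [Finset.mem_Icc]; omega)]
    exact Finset.sum_congr rfl (fun k _ => by rw [Finset.sum_mul])
  have hR : ∑ j ∈ Finset.Icc (i+1) (N:ℤ), piH j * (f i - f j)^2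
      ≤ ∑ k ∈ Finset.Icc (i+1) (N:ℤ),
          (∑ j ∈ Finset.Icc k (N:ℤ), piH j * ((j : ℝ) - i)) * (f (k-1) - f k)^2 := by
    have step : ∑ j ∈ Finset.Icc (i+1) (N:ℤ), piH j * (f i - f j)^2
        ≤ ∑ j ∈ Finset.Icc (i+1) (N:ℤ),
            ∑ k ∈ Finset.Icc (i+1) j, piH j * ((j:ℝ) - i) * (f (k-1) - f k)^2 := by
      refine Finset.sum_le_sum (fun j hj => ?_)
      simp only [Finset.mem_Icc] at hj
      have hpij : 0 ≤ piH j := hpi j (by simp [hS, Finset.mem_Icc]; omega)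
      have := csR f (show i ≤ j by omega)
      calc piH j * (f i - f j)^2
          ≤ piH j * (((j:ℝ) - i) * ∑ k ∈ Finset.Icc (i+1) j, (f (k-1) - f k)^2) :=
            mul_le_mul_of_nonneg_left this hpij
        _ = ∑ k ∈ Finset.Icc (i+1) j, piH j * ((j:ℝ) - i) * (f (k-1) - f k)^2 := by
            simp only [Finset.mul_sum]; refine Finset.sum_congr rfl fun k _ => by ring
    refine step.trans_eq ?_
    rw [Finset.sum_comm' (s' := fun k => Finset.Icc k (N:ℤ))
      (t' := Finset.Icc (i+1) (N:ℤ))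
      (fun x y => by simp only [Finset.mem_Icc]; omega)]
    exact Finset.sum_congr rfl (fun k _ => by rw [Finset.sum_mul])
  exact add_le_add hL hR
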